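/- Let p be a prime. For n ∈ ℤ let S_n = {x ∈ ℚ_p : x ≠ 0, |x − 1| ≤ pⁿ and |x⁻¹ − 1| ≤ pⁿ} be the symmetric ball of radius pⁿ in ℚ_pˣ. Then for all integers m ≤ n: if m ≤ 0, the product set S_m · S_n = {ab : a ∈ S_m, b ∈ S_n} equals S_n; and if m ≥ 0, then S_m · S_n = S_{m+n}. -/

import Mathlib

open scoped Pointwise

/-- The symmetric ball of radius `pⁿ` in the multiplicative group `ℚ_pˣ`. -/
def symBall (p : ℕ) [Fact p.Prime] (n : ℤ) : Set ℚ_[p] :=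
  {x | x ≠ 0 ∧ ‖x - 1‖ ≤ (p : ℝ) ^ n ∧ ‖x⁻¹ - 1‖ ≤ (p : ℝ) ^ n}


section aux
variable {p : ℕ} [hp : Fact p.Prime]

private lemma one_lt_pR : (1:ℝ) < (p:ℝ) := by exact_mod_cast hp.out.one_lt

private lemma pR_ne : (p:ℝ) ≠ 0 := by
  exact_mod_cast hp.out.pos.ne'

private lemma pzpow_pos (n : ℤ) : (0:ℝ) < (p:ℝ) ^ n :=
  zpow_pos (by exact_mod_cast hp.out.pos) n

private lemma norm_sub_one_le (x : ℚ_[p]) : ‖x - 1‖ ≤ max ‖x‖ 1 := by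
  have := Padic.nonarchimedean x (-1)
  simpa [sub_eq_add_neg] using this

/-- key membership criterion for `m ≥ 0`. -/
private lemma mem_of_norm {m : ℤ} (hm : 0 ≤ m) {x : ℚ_[p]} (hx : x ≠ 0)
    (h1 : ‖x‖ ≤ (p:ℝ)^m) (h2 : ‖x⁻¹‖ ≤ (p:ℝ)^m) : x ∈ symBall p m := by
  have h1m : (1:ℝ) ≤ (p:ℝ)^m := one_le_zpow₀ one_lt_pR.le hm
  exact ⟨hx, (norm_sub_one_le x).trans (max_le h1 h1m),
    (norm_sub_one_le x⁻¹).trans (max_le h2 h1m)⟩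

private lemma norm_le_of_mem {n : ℤ} {x : ℚ_[p]} (hx : x ∈ symBall p n) :
    ‖x‖ ≤ max ((p:ℝ)^n) 1 := by
  have := Padic.nonarchimedean (x - 1) 1
  simp only [sub_add_cancel] at this
  exact this.trans (max_le_max hx.2.1 (by simp))

private lemma inv_mem {n : ℤ} {x : ℚ_[p]} (hx : x ∈ symBall p n) :
    x⁻¹ ∈ symBall p n := ⟨inv_ne_zero hx.1, hx.2.2, by simpa using hx.2.1⟩

private lemma mul_sub_one_le {m n t : ℤ} (hmn : m + n ≤ t) (hm : m ≤ t) (hn : n ≤ t)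
    {a b : ℚ_[p]} (ha : ‖a - 1‖ ≤ (p:ℝ)^m) (hb : ‖b - 1‖ ≤ (p:ℝ)^n)
    (hbn : ‖b‖ ≤ max ((p:ℝ)^n) 1) : ‖a * b - 1‖ ≤ (p:ℝ)^t := by
  have key : a * b - 1 = (a - 1) * b + (b - 1) := by ring
  have h1 : ‖(a - 1) * b‖ ≤ (p:ℝ)^t := by
    rw [norm_mul]
    calc ‖a - 1‖ * ‖b‖ ≤ (p:ℝ)^m * max ((p:ℝ)^n) 1 :=
          mul_le_mul ha hbn (norm_nonneg _) (pzpow_pos m).le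
      _ ≤ (p:ℝ)^t := by
          rcases max_cases ((p:ℝ)^n) 1 with ⟨h, _⟩ | ⟨h, _⟩
          · rw [h, ← zpow_add₀ (pR_ne (p := p))]
            exact zpow_le_zpow_right₀ one_lt_pR.le hmn
          · rw [h, mul_one]; exact zpow_le_zpow_right₀ one_lt_pR.le hm
  have h2 : ‖b - 1‖ ≤ (p:ℝ)^t :=
    hb.trans (zpow_le_zpow_right₀ one_lt_pR.le hn)
  rw [key]
  exact (Padic.nonarchimedean _ _).trans (max_le h1 h2)

private lemma subset_lemma {m n t : ℤ} (hmn : m + n ≤ t) (hm : m ≤ t) (hn : n ≤ t) :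
    symBall p m * symBall p n ⊆ symBall p t := by
  rintro _ ⟨a, ha, b, hb, rfl⟩
  refine ⟨mul_ne_zero ha.1 hb.1, ?_, ?_⟩
  · exact mul_sub_one_le hmn hm hn ha.2.1 hb.2.1 (norm_le_of_mem hb)
  · rw [mul_inv]
    exact mul_sub_one_le hmn hm hn ha.2.2 hb.2.2 (norm_le_of_mem (inv_mem hb))

end aux

theorem stmt_12 (p : ℕ) [Fact p.Prime] (m n : ℤ) (hmn : m ≤ n) :
    (m ≤ 0 → symBall p m * symBall p n = symBall p n) ∧
    (0 ≤ m → symBall p m * symBall p n = symBall p (m + n)) := by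
  constructor
  · intro hm0
    apply le_antisymm
    · exact subset_lemma (by omega) (by omega) le_rfl
    · intro b hb
      have h1 : (1:ℚ_[p]) ∈ symBall p m :=
        ⟨one_ne_zero, by simpa using (pzpow_pos (p := p) m).le,
          by simpa using (pzpow_pos (p := p) m).le⟩
      exact ⟨1, h1, b, hb, one_mul b⟩
  · intro hm0
    apply le_antisymm
    · exact subset_lemma le_rfl (by omega) (by omega)
    · intro c hc
      have hc0 : c ≠ 0 := hc.1
      set v : ℤ := -c.valuation with hv
      have hnorm : ‖c‖ = (p:ℝ) ^ v := Padic.norm_eq_zpow_neg_valuation hc0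
      have hninv : ‖c⁻¹‖ = (p:ℝ) ^ (-v) := by rw [norm_inv, hnorm, ← zpow_neg]
      have hmn0 : (0:ℤ) ≤ m + n := by omega
      have hub : v ≤ m + n := by
        rw [← zpow_le_zpow_iff_right₀ (one_lt_pR (p := p)), ← hnorm]
        exact (norm_le_of_mem hc).trans (max_le le_rfl
          (one_le_zpow₀ one_lt_pR.le hmn0))
      have hlb : -(m + n) ≤ v := by
        have : -v ≤ m + n := by
          rw [← zpow_le_zpow_iff_right₀ (one_lt_pR (p := p)), ← hninv]
          exact (norm_le_of_mem (inv_mem hc)).trans (max_le le_rfl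
            (one_le_zpow₀ one_lt_pR.le hmn0))
        omega
      set j : ℤ := v - max (-n) (min v n) with hj
      have hjm : -m ≤ j ∧ j ≤ m := by constructor <;> omega
      have hvj : -n ≤ v - j ∧ v - j ≤ n := by constructor <;> omega
      have hp0 : (p:ℚ_[p]) ≠ 0 := by
        exact_mod_cast (Nat.cast_ne_zero (R := ℚ_[p])).2 (Fact.out (p := p.Prime)).pos.ne'
      refine ⟨(p:ℚ_[p]) ^ (-j), ?_, c * (p:ℚ_[p]) ^ j, ?_, ?_⟩
      · refine mem_of_norm hm0 (zpow_ne_zero _ hp0) ?_ ?_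
        · rw [Padic.norm_p_zpow, neg_neg]
          exact zpow_le_zpow_right₀ one_lt_pR.le hjm.2
        · rw [← zpow_neg, Padic.norm_p_zpow, neg_neg]
          exact zpow_le_zpow_right₀ one_lt_pR.le (by omega)
      · refine mem_of_norm (by omega) (mul_ne_zero hc0 (zpow_ne_zero _ hp0)) ?_ ?_
        · rw [norm_mul, Padic.norm_p_zpow, hnorm,
            ← zpow_add₀ (pR_ne (p := p))]
          exact zpow_le_zpow_right₀ one_lt_pR.le (by omega)
        · rw [mul_inv, norm_mul, hninv, ← zpow_neg, Padic.norm_p_zpow, neg_neg,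
            ← zpow_add₀ (pR_ne (p := p))]
          exact zpow_le_zpow_right₀ one_lt_pR.le (by omega)
      · show (p:ℚ_[p]) ^ (-j) * (c * (p:ℚ_[p]) ^ j) = c
        rw [← mul_assoc, mul_comm ((p:ℚ_[p])^(-j)) c, mul_assoc, ← zpow_add₀ hp0]
        simp
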